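/- Let n ≥ 8 be an integer and m = ⌈log₂ n⌉. The Extended Hamming matrix M^III_{n,3} is a 3-decodable rateless matrix with decodability profile (m_1, m_2, m_3) = (1, m+1, 2m+1): the submatrix consisting of its first row (the all-ones row) is 1-decodable, the submatrix consisting of its first m+1 rows (the all-ones row together with the bit rows) is 2-decodable, and the full (2m+1) × n matrix is 3-decodable. -/

import Mathlib

/-- A binary matrix (rows indexed by `ρ`, columns by `γ`, with `M r c` meaning the entry
in row `r` and column `c` equals 1) is `d`-decodable if for every nonempty set `S` of at
most `d` columns there exists a row having exactly one entry equal to 1 among the columns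
of `S`. -/
def DDecodable {ρ γ : Type*} (M : ρ → γ → Prop) (d : ℕ) : Prop :=
  ∀ S : Finset γ, S.Nonempty → S.card ≤ d → ∃ r : ρ, ∃! c, c ∈ S ∧ M r c

/-- Entry of the Extended Hamming matrix `M^III_{n,3}` (with `m = ⌈log₂ n⌉`): row `0` is
the all-ones row; for `t ∈ {1,…,m}`, row `t` in column `c` carries the `(t−1)`-th binary
digit of `c`; and row `m+t` carries its complement. -/
def ExtHammingEntry (n m : ℕ) (r : Fin (2 * m + 1)) (c : Fin n) : Prop :=
  if r.val = 0 then True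
  else if r.val ≤ m then Nat.testBit c.val (r.val - 1) = true
  else Nat.testBit c.val (r.val - m - 1) = false

lemma bit_diff {n m : ℕ} (h : n ≤ 2 ^ m) (a b : Fin n) (hab : a ≠ b) :
    ∃ t < m, Nat.testBit a.val t ≠ Nat.testBit b.val t := by
  by_contra hcon
  push_neg at hcon
  apply hab
  apply Fin.ext
  apply Nat.eq_of_testBit_eq
  intro t
  rcases lt_or_ge t m with ht | ht
  · exact hcon t ht
  · have ha : a.val < 2 ^ t := lt_of_lt_of_le a.isLt (h.trans (Nat.pow_le_pow_right (by norm_num) ht))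
    have hb : b.val < 2 ^ t := lt_of_lt_of_le b.isLt (h.trans (Nat.pow_le_pow_right (by norm_num) ht))
    rw [Nat.testBit_lt_two_pow ha, Nat.testBit_lt_two_pow hb]

/-- Row `0` is all ones. -/
lemma row0_entry (n m : ℕ) (c : Fin n) :
    ExtHammingEntry n m ⟨0, by omega⟩ c := by
  simp [ExtHammingEntry]

/-- The bit row `t+1` tests whether bit `t` is `true`. -/
lemma rowT_entry (n m t : ℕ) (ht : t < m) (c : Fin n) :
    ExtHammingEntry n m ⟨t + 1, by omega⟩ c ↔ Nat.testBit c.val t = true := by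
  simp [ExtHammingEntry, Nat.succ_le_of_lt ht]

/-- The complemented bit row `m+t+1` tests whether bit `t` is `false`. -/
lemma rowC_entry (n m t : ℕ) (ht : t < m) (c : Fin n) :
    ExtHammingEntry n m ⟨m + t + 1, by omega⟩ c ↔ Nat.testBit c.val t = false := by
  have h1 : ¬ (m + t + 1 = 0) := by omega
  have h2 : ¬ (m + t + 1 ≤ m) := by omega
  have h3 : m + t + 1 - m - 1 = t := by omega
  simp [ExtHammingEntry, h1, h2, h3]

theorem extended_hamming_rateless (n m : ℕ) (hn : 8 ≤ n) (hm : m = Nat.clog 2 n) :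
    DDecodable
      (fun (r : {r : Fin (2 * m + 1) // r.val < 1}) (c : Fin n) =>
        ExtHammingEntry n m r.1 c) 1 ∧
    DDecodable
      (fun (r : {r : Fin (2 * m + 1) // r.val < m + 1}) (c : Fin n) =>
        ExtHammingEntry n m r.1 c) 2 ∧
    DDecodable
      (fun (r : Fin (2 * m + 1)) (c : Fin n) => ExtHammingEntry n m r c) 3 := by
  have hpow : n ≤ 2 ^ m := by
    rw [hm]; exact Nat.le_pow_clog (by norm_num) n
  have hm1 : 3 ≤ m := by
    rw [hm]
    exact (Nat.lt_clog_iff_pow_lt (by norm_num)).mpr (by norm_num; omega)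
  -- singleton case, used in all three parts
  have hsingle : ∀ (a : Fin n), ∃! c, c ∈ ({a} : Finset (Fin n)) ∧
      ExtHammingEntry n m ⟨0, by omega⟩ c := by
    intro a
    refine ⟨a, ⟨Finset.mem_singleton_self a, row0_entry n m a⟩, ?_⟩
    rintro y ⟨hy, -⟩
    simpa using hy
  -- pair case: a row among the first m+1 rows with a unique one
  have hpair : ∀ (a b : Fin n), a ≠ b → ∃ r : Fin (2 * m + 1), r.val ≤ m ∧
      ∃! c, c ∈ ({a, b} : Finset (Fin n)) ∧ ExtHammingEntry n m r c := by
    intro a b hab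
    obtain ⟨t, ht, hbit⟩ := bit_diff hpow a b hab
    refine ⟨⟨t + 1, by omega⟩, by simp; omega, ?_⟩
    cases ha : Nat.testBit a.val t with
    | false =>
      have hb : Nat.testBit b.val t = true := by
        cases hbt : Nat.testBit b.val t
        · exact absurd (ha.trans hbt.symm) hbit
        · rfl
      refine ⟨b, ⟨by simp, (rowT_entry n m t ht b).mpr hb⟩, ?_⟩
      rintro y ⟨hy, hye⟩
      rw [rowT_entry n m t ht y] at hye
      rcases Finset.mem_insert.mp hy with rfl | hy
      · simp [ha] at hye
      · exact Finset.mem_singleton.mp hy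
    | true =>
      refine ⟨a, ⟨by simp, (rowT_entry n m t ht a).mpr ha⟩, ?_⟩
      rintro y ⟨hy, hye⟩
      rw [rowT_entry n m t ht y] at hye
      rcases Finset.mem_insert.mp hy with rfl | hy
      · rfl
      · rw [Finset.mem_singleton.mp hy] at hye
        exact absurd (ha.trans hye.symm) hbit
  refine ⟨?_, ?_, ?_⟩
  · -- 1-decodable
    intro S hS hcard
    obtain ⟨a, rfl⟩ := Finset.card_eq_one.mp (le_antisymm hcard hS.card_pos)
    exact ⟨⟨⟨0, by omega⟩, by norm_num⟩, hsingle a⟩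
  · -- 2-decodable
    intro S hS hcard
    have h1 := hS.card_pos
    rcases (show S.card = 1 ∨ S.card = 2 by omega) with h | h
    · obtain ⟨a, rfl⟩ := Finset.card_eq_one.mp h
      exact ⟨⟨⟨0, by omega⟩, by norm_num⟩, hsingle a⟩
    · obtain ⟨a, b, hab, rfl⟩ := Finset.card_eq_two.mp h
      obtain ⟨r, hr, hu⟩ := hpair a b hab
      exact ⟨⟨r, by omega⟩, hu⟩
  · -- 3-decodable
    intro S hS hcard
    have h1 := hS.card_pos
    rcases (show S.card = 1 ∨ S.card = 2 ∨ S.card = 3 by omega) with h | h | h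
    · obtain ⟨a, rfl⟩ := Finset.card_eq_one.mp h
      exact ⟨⟨0, by omega⟩, hsingle a⟩
    · obtain ⟨a, b, hab, rfl⟩ := Finset.card_eq_two.mp h
      obtain ⟨r, hr, hu⟩ := hpair a b hab
      exact ⟨r, hu⟩
    · obtain ⟨a, b, c, hab, hac, hbc, rfl⟩ := Finset.card_eq_three.mp h
      obtain ⟨t, ht, hbit⟩ := bit_diff hpow a b hab
      -- determine the minority element x among {a,b,c} in bit t;
      -- y,z the others, with bit of y,z ≠ bit of x
      obtain ⟨x, hxS, hmin⟩ :
          ∃ x, x ∈ ({a, b, c} : Finset (Fin n)) ∧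
            ∀ y ∈ ({a, b, c} : Finset (Fin n)),
              Nat.testBit y.val t = Nat.testBit x.val t → y = x := by
        rcases eq_or_ne (Nat.testBit c.val t) (Nat.testBit b.val t) with hc | hc
        · refine ⟨a, by simp, ?_⟩
          intro y hy hye
          rcases Finset.mem_insert.mp hy with rfl | hy
          · rfl
          rcases Finset.mem_insert.mp hy with rfl | hy
          · exact absurd hye.symm hbit
          · rw [Finset.mem_singleton.mp hy] at hye ⊢
            exact absurd (hc.symm.trans hye).symm hbit
        · have hca : Nat.testBit c.val t = Nat.testBit a.val t := by
            cases h1 : Nat.testBit a.val t <;> cases h2 : Nat.testBit b.val t <;>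
              cases h3 : Nat.testBit c.val t <;> simp_all
          refine ⟨b, by simp, ?_⟩
          intro y hy hye
          rcases Finset.mem_insert.mp hy with rfl | hy
          · exact absurd hye hbit
          rcases Finset.mem_insert.mp hy with rfl | hy
          · rfl
          · rw [Finset.mem_singleton.mp hy] at hye ⊢
            have := hca.trans (hca.symm.trans hye)
            exact absurd (hca.symm.trans hye) (fun hh => hc (hca.trans hh ▸ hye ▸ rfl))
      cases hx : Nat.testBit x.val t with
      | false =>
        refine ⟨⟨m + t + 1, by omega⟩, x, ⟨hxS, (rowC_entry n m t ht x).mpr hx⟩, ?_⟩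
        rintro y ⟨hy, hye⟩
        rw [rowC_entry n m t ht y] at hye
        exact hmin y hy (hye.trans hx.symm)
      | true =>
        refine ⟨⟨t + 1, by omega⟩, x, ⟨hxS, (rowT_entry n m t ht x).mpr hx⟩, ?_⟩
        rintro y ⟨hy, hye⟩
        rw [rowT_entry n m t ht y] at hye
        exact hmin y hy (hye.trans hx.symm)
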